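/- arXiv:2410.02058 — 2 statements merged into one kernel-verified Lean document; each statement's English description precedes it below -/
import Mathlib

section
/- Let Σ be a finite alphabet with at least two elements and let θ be a primitive substitution on Σ. Then there exists a constant C > 0 such that for all integers n ≥ 1, the number p_{F[θ]}(n) of words of length exactly n in the language F[θ] satisfies p_{F[θ]}(n) ≤ C·n. -/
/-- The extension of a substitution `θ` to finite words, by concatenation:
`θ(w₁…w_m) = θ(w₁)…θ(w_m)`. -/
def substWord {α : Type*} (θ : α → List α) : List α → List α :=
  fun w => w.foldr (fun a acc => θ a ++ acc) []

/-- `θ` is a substitution: every letter maps to a nonempty word. -/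
def IsSubstitution {α : Type*} (θ : α → List α) : Prop := ∀ a, θ a ≠ []

/-- `θ` is primitive: there is `k ≥ 1` such that for all letters `a, b`,
the letter `b` occurs in `θ^k(a)`. -/
def IsPrimitiveSubst {α : Type*} (θ : α → List α) : Prop :=
  ∃ k, 1 ≤ k ∧ ∀ a b : α, b ∈ (substWord θ)^[k] [a]

/-- The language `F[θ]`: all nonempty factors (contiguous subwords) of the words
`θ^m(a)`, over all `m ≥ 1` and letters `a`. -/
def substLang {α : Type*} (θ : α → List α) : Set (List α) :=
  {w | w ≠ [] ∧ ∃ m, 1 ≤ m ∧ ∃ a : α, w <:+: (substWord θ)^[m] [a]}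

section AuxLemmas

set_option linter.unusedSectionVars false

variable {A : Type*} (θ : A → List A)

private lemma substWord_cons' (a : A) (u : List A) :
    substWord θ (a :: u) = θ a ++ substWord θ u := rfl

private lemma substWord_append' (u v : List A) :
    substWord θ (u ++ v) = substWord θ u ++ substWord θ v := by
  induction u with
  | nil => rfl
  | cons a u ih => simp [substWord_cons', ih]

private lemma iter_append' (m : ℕ) (u v : List A) :
    (substWord θ)^[m] (u ++ v) = (substWord θ)^[m] u ++ (substWord θ)^[m] v := by
  induction m generalizing u v with
  | zero => rfl
  | succ m ih => simp [Function.iterate_succ_apply, substWord_append', ih]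

private lemma iter_cons' (m : ℕ) (a : A) (u : List A) :
    (substWord θ)^[m] (a :: u) = (substWord θ)^[m] [a] ++ (substWord θ)^[m] u := by
  simpa using iter_append' θ m [a] u

private lemma substWord_ne_nil' (hsub : IsSubstitution θ) {u : List A} (hu : u ≠ []) :
    substWord θ u ≠ [] := by
  cases u with
  | nil => exact absurd rfl hu
  | cons a u =>
    simp [substWord_cons']
    exact fun h => (hsub a h).elim

private lemma iter_ne_nil' (hsub : IsSubstitution θ) (m : ℕ) {u : List A} (hu : u ≠ []) :
    (substWord θ)^[m] u ≠ [] := by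
  induction m generalizing u with
  | zero => exact hu
  | succ m ih => rw [Function.iterate_succ_apply]; exact ih (substWord_ne_nil' θ hsub hu)

private lemma le_len' {k : ℕ} (hk : ∀ a b : A, b ∈ (substWord θ)^[k] [a]) (j : ℕ) (a b : A) :
    ((substWord θ)^[j] [a]).length ≤ ((substWord θ)^[j+k] [b]).length := by
  obtain ⟨s, t, hst⟩ := List.append_of_mem (hk b a)
  rw [Function.iterate_add_apply, hst, show s ++ a :: t = s ++ [a] ++ t by simp,
    iter_append', iter_append']
  simp
  omega

private lemma infix_step' {k : ℕ} (hk : ∀ a b : A, b ∈ (substWord θ)^[k] [a]) (j : ℕ) (a : A) :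
    (substWord θ)^[j] [a] <:+: (substWord θ)^[j+k] [a] := by
  obtain ⟨s, t, hst⟩ := List.append_of_mem (hk a a)
  rw [Function.iterate_add_apply, hst, show s ++ a :: t = s ++ [a] ++ t by simp,
    iter_append', iter_append']
  exact ⟨_, _, rfl⟩

private lemma infix_iter' {k : ℕ} (hk : ∀ a b : A, b ∈ (substWord θ)^[k] [a]) (j : ℕ) (a : A)
    (i : ℕ) : (substWord θ)^[j] [a] <:+: (substWord θ)^[j + i*k] [a] := by
  induction i with
  | zero => simp
  | succ i ih =>
    have h2 := infix_step' θ hk (j + i*k) a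
    have he : j + (i+1)*k = j + i*k + k := by ring
    rw [he]
    exact ih.trans h2

private lemma two_le_len' [Fintype A] {k : ℕ} (hk : ∀ a b : A, b ∈ (substWord θ)^[k] [a])
    (hA : 2 ≤ Fintype.card A) (a : A) :
    2 ≤ ((substWord θ)^[k] [a]).length := by
  classical
  obtain ⟨b, c, hbc⟩ := Fintype.exists_pair_of_one_lt_card (α := A) (by omega)
  have h1 : b ∈ (substWord θ)^[k] [a] := hk a b
  have h2 : c ∈ (substWord θ)^[k] [a] := hk a c
  have hss : ({b, c} : Finset A) ⊆ ((substWord θ)^[k] [a]).toFinset := by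
    intro x hx
    rcases Finset.mem_insert.mp hx with rfl | hx
    · simpa using h1
    · rw [Finset.mem_singleton] at hx; subst hx; simpa using h2
  calc 2 = ({b, c} : Finset A).card := (Finset.card_pair hbc).symm
    _ ≤ ((substWord θ)^[k] [a]).toFinset.card := Finset.card_le_card hss
    _ ≤ ((substWord θ)^[k] [a]).length := List.toFinset_card_le _

private lemma pow_le_len' [Fintype A] {k : ℕ} (hk : ∀ a b : A, b ∈ (substWord θ)^[k] [a])
    (hA : 2 ≤ Fintype.card A) (i : ℕ) (a : A) :
    2^i ≤ ((substWord θ)^[i*k] [a]).length := by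
  induction i generalizing a with
  | zero => simp
  | succ i ih =>
    have he : (i+1)*k = i*k + k := by ring
    rw [he, Function.iterate_add_apply]
    have h2 := two_le_len' θ hk hA a
    obtain ⟨b, c, u, hbu⟩ : ∃ b c u, (substWord θ)^[k] [a] = b :: c :: u := by
      rcases hEq : (substWord θ)^[k] [a] with _ | ⟨b, _ | ⟨c, u⟩⟩
      · rw [hEq] at h2; simp at h2
      · rw [hEq] at h2; simp at h2
      · exact ⟨b, c, u, rfl⟩
    rw [hbu, iter_cons', iter_cons' θ (i*k) c u]
    simp only [List.length_append]
    have hb := ih b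
    have hc := ih c
    have h21 : 2^(i+1) = 2^i + 2^i := by ring
    omega

private lemma substWord_len_le' {L : ℕ} (hL : ∀ a, (θ a).length ≤ L) (u : List A) :
    (substWord θ u).length ≤ L * u.length := by
  induction u with
  | nil => simp [substWord]
  | cons a u ih =>
    rw [substWord_cons']
    simp only [List.length_append, List.length_cons]
    have := hL a
    calc (θ a).length + (substWord θ u).length ≤ L + L * u.length := by omega
      _ = L * (u.length + 1) := by ring

private lemma iter_len_le' {L : ℕ} (hL : ∀ a, (θ a).length ≤ L) (i : ℕ) (u : List A) :
    ((substWord θ)^[i] u).length ≤ L^i * u.length := by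
  induction i generalizing u with
  | zero => simp
  | succ i ih =>
    rw [Function.iterate_succ_apply]
    calc ((substWord θ)^[i] (substWord θ u)).length ≤ L^i * (substWord θ u).length := ih _
      _ ≤ L^i * (L * u.length) := Nat.mul_le_mul_left _ (substWord_len_le' θ hL u)
      _ = L^(i+1) * u.length := by ring

private lemma infix_append_cases' {α : Type*} {w x y : List α} (h : w <:+: x ++ y) :
    w <:+: x ∨ w <:+: y ∨ ∃ w₁ w₂, w = w₁ ++ w₂ ∧ w₁ <:+ x ∧ w₂ <+: y := by
  obtain ⟨s, t, hst⟩ := h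
  rw [List.append_assoc] at hst
  rcases List.append_eq_append_iff.mp hst with ⟨a', hx, hwt⟩ | ⟨c', hs, hy⟩
  · rcases List.append_eq_append_iff.mp hwt with ⟨e, ha', ht⟩ | ⟨e, hw, hy⟩
    · left; exact ⟨s, e, by rw [hx, ha', List.append_assoc]⟩
    · right; right
      exact ⟨a', e, hw, ⟨s, hx.symm⟩, ⟨t, hy.symm⟩⟩
  · right; left
    exact ⟨c', t, by rw [hy, List.append_assoc]⟩

private lemma prefix_shrink' {α : Type*} {w x y : List α} (h : w <+: x ++ y)
    (hlen : w.length ≤ x.length) : w <+: x := by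
  obtain ⟨r, hr⟩ := h
  rcases List.append_eq_append_iff.mp hr with ⟨e, hx, hr2⟩ | ⟨e, hw, hy⟩
  · exact ⟨e, hx.symm⟩
  · have hl := congrArg List.length hw
    simp at hl
    have he : e = [] := List.eq_nil_of_length_eq_zero (by omega)
    subst he
    simp at hw
    exact hw ▸ List.prefix_refl x

private lemma suffix_prefix_infix' {α : Type*} {w₁ w₂ x y : List α}
    (h1 : w₁ <:+ x) (h2 : w₂ <+: y) : w₁ ++ w₂ <:+: x ++ y := by
  obtain ⟨s, hs⟩ := h1
  obtain ⟨t, ht⟩ := h2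
  exact ⟨s, t, by rw [← hs, ← ht]; simp⟩

private lemma two_block' (m n : ℕ)
    (hblk : ∀ a : A, n ≤ ((substWord θ)^[m] [a]).length) :
    ∀ u : List A, u ≠ [] → ∀ w : List A, w <:+: (substWord θ)^[m] u → w.length ≤ n →
    ∃ a b : A, w <:+: (substWord θ)^[m] [a] ++ (substWord θ)^[m] [b] := by
  intro u
  induction u with
  | nil => intro h; exact absurd rfl h
  | cons c u ih =>
    intro _ w hw hwn
    cases u with
    | nil =>
      exact ⟨c, c, hw.trans (List.prefix_append _ _).isInfix⟩
    | cons d u' =>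
      rw [iter_cons'] at hw
      rcases infix_append_cases' hw with h | h | ⟨w₁, w₂, hww, h1, h2⟩
      · exact ⟨c, c, h.trans (List.prefix_append _ _).isInfix⟩
      · exact ih (by simp) w h hwn
      · rw [iter_cons'] at h2
        have hw2len : w₂.length ≤ ((substWord θ)^[m] [d]).length := by
          have hl := congrArg List.length hww
          simp at hl
          have := hblk d
          omega
        have h2' := prefix_shrink' h2 hw2len
        exact ⟨c, d, hww ▸ suffix_prefix_infix' h1 h2'⟩

end AuxLemmas

/-- For a primitive substitution on a finite alphabet with at least two letters, the
number of words of length exactly `n` in `F[θ]` is at most `C·n`. -/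
theorem stmt_0 {A : Type*} [Fintype A] (hA : 2 ≤ Fintype.card A)
    (θ : A → List A) (hsub : IsSubstitution θ) (hprim : IsPrimitiveSubst θ) :
    ∃ C : ℝ, 0 < C ∧ ∀ n : ℕ, 1 ≤ n →
      (({w ∈ substLang θ | w.length = n}).ncard : ℝ) ≤ C * n := by
  classical
  obtain ⟨k, hk1, hk⟩ := hprim
  set L := Finset.univ.sup (fun a : A => (θ a).length) with hLdef
  have hL : ∀ a, (θ a).length ≤ L := fun a => by
    rw [hLdef]; exact Finset.le_sup (f := fun a : A => (θ a).length) (Finset.mem_univ a)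
  have hcard : 0 < Fintype.card A := by omega
  have hL1 : 1 ≤ L := by
    obtain ⟨a⟩ := Fintype.card_pos_iff.mp hcard
    have h1 := hL a
    have h2 : 1 ≤ (θ a).length := List.length_pos_iff.mpr (hsub a)
    omega
  refine ⟨2 * (Fintype.card A)^2 * L^(k+1), ?_, ?_⟩
  · have h1 : (0:ℝ) < (Fintype.card A : ℝ) := by exact_mod_cast hcard
    have h2 : (0:ℝ) < (L:ℝ) := by exact_mod_cast hL1
    positivity
  intro n hn
  -- choose the minimal level m ≥ 1 at which all blocks have length ≥ n
  have hex : ∃ m, 1 ≤ m ∧ ∀ a : A, n ≤ ((substWord θ)^[m] [a]).length := by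
    refine ⟨n * k, ?_, ?_⟩
    · calc 1 = 1 * 1 := rfl
        _ ≤ n * k := Nat.mul_le_mul hn hk1
    · intro a
      have h1 := pow_le_len' θ hk hA n a
      have h2n : n ≤ 2^n := Nat.le_of_lt (Nat.lt_two_pow_self (n := n))
      omega
  set m := Nat.find hex with hmdef
  obtain ⟨hm1, hmblk⟩ : 1 ≤ m ∧ ∀ a : A, n ≤ ((substWord θ)^[m] [a]).length :=
    Nat.find_spec hex
  -- upper bound on block lengths at level m
  have hMm : ∀ b : A, ((substWord θ)^[m] [b]).length ≤ L^(k+1) * n := by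
    by_cases hcase : m ≤ k + 1
    · intro b
      have h1 : ((substWord θ)^[m] [b]).length ≤ L^m * 1 := by
        simpa using iter_len_le' θ hL m [b]
      have h2 : L^m ≤ L^(k+1) := Nat.pow_le_pow_right hL1 hcase
      have h3 : L^(k+1) ≤ L^(k+1) * n := Nat.le_mul_of_pos_right _ (by omega)
      omega
    · push_neg at hcase
      have hmin := Nat.find_min hex (show m - 1 < m by omega)
      push_neg at hmin
      obtain ⟨a₀, ha₀⟩ := hmin (by omega)
      intro b
      have hsplit : m = (k+1) + (m - 1 - k) := by omega
      have e1 : ((substWord θ)^[m] [b]).length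
          = ((substWord θ)^[k+1] ((substWord θ)^[m-1-k] [b])).length := by
        rw [← Function.iterate_add_apply, ← hsplit]
      have e2 : ((substWord θ)^[k+1] ((substWord θ)^[m-1-k] [b])).length
          ≤ L^(k+1) * ((substWord θ)^[m-1-k] [b]).length := iter_len_le' θ hL _ _
      have e3 : ((substWord θ)^[m-1-k] [b]).length ≤ ((substWord θ)^[m-1] [a₀]).length := by
        have h := le_len' θ hk (m-1-k) b a₀
        rwa [show m-1-k+k = m-1 by omega] at h
      have e4 : L^(k+1) * ((substWord θ)^[m-1-k] [b]).length ≤ L^(k+1) * n :=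
        Nat.mul_le_mul_left _ (le_trans e3 (le_of_lt ha₀))
      omega
  -- the counting function
  set B := L^(k+1) * n with hBdef
  set g : A × A × Fin (2*B) → List A := fun p =>
    (((substWord θ)^[m] [p.1] ++ (substWord θ)^[m] [p.2.1]).drop (p.2.2 : ℕ)).take n
    with hgdef
  have hsubset : {w ∈ substLang θ | w.length = n} ⊆ ↑(Finset.image g Finset.univ) := by
    rintro w ⟨hw, hwlen⟩
    obtain ⟨hwne, M', hM'1, c, hwM'⟩ := hw
    have hinf : w <:+: (substWord θ)^[M' + m*k] [c] := hwM'.trans (infix_iter' θ hk M' c m)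
    have hmk : m ≤ m * k := Nat.le_mul_of_pos_right m (by omega)
    have heq : (substWord θ)^[M' + m*k] [c]
        = (substWord θ)^[m] ((substWord θ)^[M' + m*k - m] [c]) := by
      rw [← Function.iterate_add_apply]
      congr 1
      omega
    rw [heq] at hinf
    have hune : (substWord θ)^[M' + m*k - m] [c] ≠ [] := iter_ne_nil' θ hsub _ (by simp)
    obtain ⟨a, b, hab⟩ := two_block' θ m n hmblk _ hune w hinf (le_of_eq hwlen)
    obtain ⟨s, t, hst⟩ := hab
    have hlen := congrArg List.length hst
    simp only [List.length_append] at hlen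
    have hXa := hMm a
    have hXb := hMm b
    have hi : s.length < 2*B := by omega
    refine Finset.mem_coe.mpr (Finset.mem_image.mpr ⟨⟨a, b, ⟨s.length, hi⟩⟩, Finset.mem_univ _, ?_⟩)
    show ((((substWord θ)^[m] [a] ++ (substWord θ)^[m] [b]).drop s.length).take n) = w
    rw [← hst, show s ++ w ++ t = s ++ (w ++ t) from List.append_assoc _ _ _, List.drop_left,
      List.take_left' hwlen]
  calc (({w ∈ substLang θ | w.length = n}).ncard : ℝ)
      ≤ ((Finset.image g Finset.univ).card : ℝ) := by
        have h := Set.ncard_le_ncard hsubset (Finset.image g Finset.univ).finite_toSet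
        rw [Set.ncard_coe_finset] at h
        exact_mod_cast h
    _ ≤ (Fintype.card (A × A × Fin (2*B)) : ℝ) := by
        have h := (Finset.card_image_le (f := g) (s := Finset.univ)).trans
          (le_of_eq Finset.card_univ)
        exact_mod_cast h
    _ = 2 * (Fintype.card A)^2 * L^(k+1) * n := by
        rw [Fintype.card_prod, Fintype.card_prod, Fintype.card_fin, hBdef]
        push_cast
        ring
    _ = 2 * (Fintype.card A)^2 * L^(k+1) * n := rfl
end

section
/- Let Σ be a finite alphabet with at least two elements and let θ be a primitive substitution on Σ. Then the language F[θ] is subexponentially growing: for every real number b > 1, the quotient β_{F[θ]}(n)/b^n tends to 0 as n → ∞. -/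
open Filter

namespace SubstAux
variable {α : Type*}


variable {α : Type*}

lemma substWord_nil (θ : α → List α) : substWord θ [] = [] := rfl

lemma substWord_cons (θ : α → List α) (a : α) (l : List α) :
    substWord θ (a :: l) = θ a ++ substWord θ l := rfl

lemma substWord_append (θ : α → List α) (l₁ l₂ : List α) :
    substWord θ (l₁ ++ l₂) = substWord θ l₁ ++ substWord θ l₂ := by
  induction l₁ with
  | nil => simp [substWord_nil]
  | cons a t ih => simp [substWord_cons, ih]

lemma iter_nil (θ : α → List α) (k : ℕ) : (substWord θ)^[k] [] = [] := by
  induction k with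
  | zero => rfl
  | succ k ih => rw [Function.iterate_succ_apply, substWord_nil, ih]

lemma iter_append (θ : α → List α) (k : ℕ) (l₁ l₂ : List α) :
    (substWord θ)^[k] (l₁ ++ l₂) = (substWord θ)^[k] l₁ ++ (substWord θ)^[k] l₂ := by
  induction k generalizing l₁ l₂ with
  | zero => simp
  | succ k ih => simp [Function.iterate_succ_apply, substWord_append, ih]

lemma iter_eq_substWord (θ : α → List α) (k : ℕ) (l : List α) :
    (substWord θ)^[k] l = substWord (fun a => (substWord θ)^[k] [a]) l := by
  induction l with
  | nil => simp [iter_nil, substWord_nil]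
  | cons a t ih =>
      rw [show a :: t = [a] ++ t from rfl, iter_append, ih]
      simp [substWord_append, substWord_cons, substWord_nil]

lemma infix_substWord (θ : α → List α) {l₁ l₂ : List α} (h : l₁ <:+: l₂) :
    substWord θ l₁ <:+: substWord θ l₂ := by
  obtain ⟨s, t, rfl⟩ := h
  rw [substWord_append, substWord_append]
  exact ⟨_, _, rfl⟩

lemma infix_iter (θ : α → List α) (k : ℕ) {l₁ l₂ : List α} (h : l₁ <:+: l₂) :
    (substWord θ)^[k] l₁ <:+: (substWord θ)^[k] l₂ := by
  induction k with
  | zero => exact h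
  | succ k ih => rw [Function.iterate_succ_apply', Function.iterate_succ_apply']
                 exact infix_substWord θ ih

lemma length_substWord_le (θ : α → List α) (M : ℕ) (hM : ∀ a, (θ a).length ≤ M)
    (l : List α) : (substWord θ l).length ≤ M * l.length := by
  induction l with
  | nil => simp [substWord_nil]
  | cons a t ih =>
      rw [substWord_cons, List.length_append, List.length_cons, Nat.mul_succ]
      have := hM a; omega

lemma le_length_substWord (θ : α → List α) (m : ℕ) (hm : ∀ a, m ≤ (θ a).length)
    (l : List α) : m * l.length ≤ (substWord θ l).length := by
  induction l with
  | nil => simp [substWord_nil]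
  | cons a t ih =>
      rw [substWord_cons, List.length_append, List.length_cons, Nat.mul_succ]
      have := hm a; omega

lemma infix_append_cases {w l₁ l₂ : List α} (h : w <:+: l₁ ++ l₂) :
    w <:+: l₁ ∨ w <:+: l₂ ∨
      ∃ s p, s ≠ [] ∧ p ≠ [] ∧ w = s ++ p ∧ s <:+ l₁ ∧ p <+: l₂ := by
  obtain ⟨s, t, hst⟩ := h
  rw [List.append_assoc] at hst
  rcases List.append_eq_append_iff.mp hst with ⟨a', ha1, ha2⟩ | ⟨c, hc1, hc2⟩
  · -- l₁ = s ++ a' , w ++ t = a' ++ l₂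
    rcases List.append_eq_append_iff.mp ha2 with ⟨e, he1, he2⟩ | ⟨e, he1, he2⟩
    · -- a' = w ++ e, t = e ++ l₂  → w prefix of a', a' suffix of l₁?? a' is suffix? l₁ = s ++ a'
      left
      exact ⟨s, e, by rw [ha1, he1, List.append_assoc]⟩
    · -- w = a' ++ e, l₂ = e ++ t
      rcases eq_or_ne a' [] with rfl | ha
      · right; left; exact ⟨[], t, by simp [he1, he2.symm]⟩
      rcases eq_or_ne e [] with rfl | he
      · left; exact ⟨s, [], by simp [ha1, he1]⟩
      · right; right
        exact ⟨a', e, ha, he, he1, ⟨s, ha1.symm⟩, ⟨t, he2.symm⟩⟩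
  · -- s = l₁ ++ c, l₂ = c ++ (w ++ t)
    right; left
    exact ⟨c, t, by rw [hc2, List.append_assoc]⟩

lemma prefix_of_prefix_append {p l₁ l₂ : List α} (h : p <+: l₁ ++ l₂)
    (hlen : p.length ≤ l₁.length) : p <+: l₁ := by
  have h1 : p = (l₁ ++ l₂).take p.length := by
    obtain ⟨t, ht⟩ := h
    rw [← ht, List.take_append_of_le_length le_rfl, List.take_length]
  rw [List.take_append_of_le_length hlen] at h1
  rw [h1]; exact List.take_prefix _ _

/-- A short factor of the image of a word sits inside the image of ≤ 2 letters. -/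
lemma cover (σ : α → List α) {w : List α} {n : ℕ} (hw : w ≠ []) (hlen : w.length ≤ n)
    (hmin : ∀ a, n ≤ (σ a).length) :
    ∀ u : List α, w <:+: substWord σ u →
      ∃ x, x <:+: u ∧ x.length ≤ 2 ∧ w <:+: substWord σ x := by
  intro u
  induction u with
  | nil => intro h; rw [substWord_nil] at h
           exact absurd (List.eq_nil_of_infix_nil h) hw
  | cons a u' ih =>
      intro h
      rw [substWord_cons] at h
      rcases infix_append_cases h with h1 | h1 | ⟨s, p, hs, hp, rfl, hsuf, hpre⟩
      · exact ⟨[a], ⟨[], u', rfl⟩, by simp, by simpa [substWord_cons, substWord_nil] using h1⟩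
      · obtain ⟨x, hx, hx2, hx3⟩ := ih h1
        exact ⟨x, hx.trans ⟨[a], [], by simp⟩, hx2, hx3⟩
      · cases u' with
        | nil => simp [substWord_nil] at hpre
                 exact absurd hpre hp
        | cons b u'' =>
            rw [substWord_cons] at hpre
            have hplen : p.length ≤ (σ b).length := by
              have := hmin b
              have : p.length ≤ n := by
                have : p.length ≤ s.length + p.length := Nat.le_add_left _ _
                calc p.length ≤ (s ++ p).length := by simp
                  _ ≤ n := hlen
              omega
            have hpb : p <+: σ b := prefix_of_prefix_append hpre hplen
            refine ⟨[a, b], ⟨[], u'', rfl⟩, by simp, ?_⟩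
            obtain ⟨q, hq⟩ := hsuf
            obtain ⟨r, hr⟩ := hpb
            refine ⟨q, r, ?_⟩
            simp only [substWord_cons, substWord_nil, List.append_nil]
            rw [← hq, ← hr]
            simp [List.append_assoc]


variable [DecidableEq α]


def infixFS (v : List α) : Finset (List α) :=
  ((Finset.range (v.length+1)) ×ˢ (Finset.range (v.length+1))).image
    (fun p => (v.drop p.1).take p.2)

lemma mem_infixFS {w v : List α} (h : w <:+: v) : w ∈ infixFS v := by
  obtain ⟨s, t, rfl⟩ := h
  refine Finset.mem_image.mpr ⟨(s.length, w.length), ?_, ?_⟩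
  · rw [Finset.mem_product]
    constructor <;> (rw [Finset.mem_range]; simp [Nat.lt_succ]) <;> omega
  · rw [List.append_assoc, List.drop_left, List.take_left]

lemma card_infixFS (v : List α) : (infixFS v).card ≤ (v.length+1)^2 := by
  calc (infixFS v).card ≤ _ := Finset.card_image_le
    _ ≤ (v.length+1)^2 := by rw [Finset.card_product, Finset.card_range]; ring_nf; omega

variable (α) in
def pairFS [Fintype α] : Finset (List α) :=
  {[]} ∪ Finset.univ.image (fun a : α => [a]) ∪
    (Finset.univ ×ˢ Finset.univ).image (fun p : α × α => [p.1, p.2])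

lemma mem_pairFS [Fintype α] {x : List α} (h : x.length ≤ 2) : x ∈ pairFS α := by
  match x with
  | [] => simp [pairFS]
  | [a] => simp [pairFS]
  | [a, b] =>
      simp only [pairFS, Finset.mem_union, Finset.mem_image]
      right
      exact ⟨(a, b), by simp, rfl⟩
  | _ :: _ :: _ :: _ => simp at h

omit [DecidableEq α] in
lemma two_le_of_two_mem {l : List α} {b c : α} (hb : b ∈ l) (hc : c ∈ l) (hbc : b ≠ c) :
    2 ≤ l.length := by
  match l with
  | [] => simp at hb
  | [x] => simp at hb hc; exact absurd (hb.trans hc.symm) hbc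
  | _ :: _ :: _ => simp


lemma length_le_of_mem_pairFS [Fintype α] {x : List α} (h : x ∈ pairFS α) : x.length ≤ 2 := by
  simp only [pairFS, Finset.mem_union, Finset.mem_image, Finset.mem_singleton] at h
  rcases h with (rfl | ⟨a, _, rfl⟩) | ⟨p, _, rfl⟩ <;> simp

end SubstAux

open SubstAux

/-- For a primitive substitution on a finite alphabet with at least two letters, the
language `F[θ]` is subexponentially growing: for every real `b > 1`,
`β_{F[θ]}(n) / bⁿ → 0` as `n → ∞`. -/
theorem stmt_2 {A : Type*} [Fintype A] (hA : 2 ≤ Fintype.card A)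
    (θ : A → List A) (hsub : IsSubstitution θ) (hprim : IsPrimitiveSubst θ) :
    ∀ b : ℝ, 1 < b →
      Tendsto (fun n : ℕ => (({w ∈ substLang θ | w.length ≤ n}).ncard : ℝ) / b ^ n)
        atTop (nhds 0) := by
  classical
  obtain ⟨k, hk1, hk⟩ := hprim
  set S := substWord θ with hS
  -- maximal letter-image length
  have : Nonempty A := Fintype.card_pos_iff.mp (by omega)
  set M : ℕ := Finset.univ.sup (fun a : A => (θ a).length) with hMdef
  have hM : ∀ a, (θ a).length ≤ M := by
    intro a
    rw [hMdef]
    exact Finset.le_sup (f := fun a : A => (θ a).length) (Finset.mem_univ a)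
  have hM1 : 1 ≤ M := by
    obtain ⟨a⟩ := ‹Nonempty A›
    have := hM a
    have h0 : (θ a).length ≠ 0 := fun h => hsub a (List.eq_nil_of_length_eq_zero h)
    omega
  -- upper bound on iterate lengths
  have iterlen : ∀ (i : ℕ) (l : List A), (S^[i] l).length ≤ M ^ i * l.length := by
    intro i
    induction i with
    | zero => simp
    | succ i ih =>
        intro l
        rw [Function.iterate_succ_apply']
        calc (S (S^[i] l)).length ≤ M * (S^[i] l).length :=
              length_substWord_le θ M hM _
          _ ≤ M * (M ^ i * l.length) := Nat.mul_le_mul_left _ (ih l)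
          _ = M ^ (i+1) * l.length := by ring
  -- expansion: each k-iterate of a letter has length ≥ 2
  have two_le : ∀ a : A, 2 ≤ (S^[k] [a]).length := by
    intro a
    obtain ⟨b, c, hbc⟩ := Fintype.exists_pair_of_one_lt_card (α := A) (by omega)
    exact two_le_of_two_mem (hk a b) (hk a c) hbc
  -- lower bound: |S^[j*k] [a]| ≥ 2^j
  have minlen : ∀ (j : ℕ) (a : A), 2 ^ j ≤ (S^[j*k] [a]).length := by
    intro j
    induction j with
    | zero => simp
    | succ j ih =>
        intro a
        have heq : S^[(j+1)*k] [a] = S^[j*k] (S^[k] [a]) := by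
          rw [Nat.succ_mul, Function.iterate_add_apply]
        rw [heq, iter_eq_substWord θ (j*k) (S^[k] [a])]
        calc 2 ^ (j+1) = 2 ^ j * 2 := by ring
          _ ≤ 2 ^ j * (S^[k] [a]).length := Nat.mul_le_mul_left _ (two_le a)
          _ ≤ _ := le_length_substWord _ (2^j) ih _
  -- pumping: factors appear at arbitrarily high iterates
  have pump : ∀ (w : List A) (m : ℕ) (a : A), w <:+: S^[m] [a] →
      ∀ N : ℕ, ∃ m', N ≤ m' ∧ ∃ b, w <:+: S^[m'] [b] := by
    intro w m a h N
    induction N with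
    | zero => exact ⟨m, Nat.zero_le _, a, h⟩
    | succ N ih =>
        obtain ⟨m', hm', b, hw⟩ := ih
        refine ⟨m' + k, by omega, b, ?_⟩
        have hmem : [b] <:+: S^[k] [b] := by
          obtain ⟨s, t, hst⟩ := List.append_of_mem (hk b b)
          exact ⟨s, t, by rw [hst]; simp⟩
        have := (infix_iter θ m' hmem)
        rw [← Function.iterate_add_apply] at this
        exact hw.trans this
  -- key polynomial bound
  set K : ℕ := M ^ k with hKdef
  have hK1 : 1 ≤ K := Nat.one_le_pow _ _ (by omega)
  have key : ∀ n : ℕ, 1 ≤ n →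
      ({w ∈ substLang θ | w.length ≤ n}).ncard ≤
        ((pairFS A).card * (2*K+1)^2) * n ^ (2*K) := by
    intro n hn
    set j : ℕ := Nat.log 2 n + 1 with hjdef
    have hn2j : n ≤ 2 ^ j := le_of_lt (Nat.lt_pow_succ_log_self (by norm_num) n)
    set σj : A → List A := fun c => S^[j*k] [c] with hσj
    have hmin : ∀ c, n ≤ (σj c).length := fun c => hn2j.trans (minlen j c)
    -- covering by the finite set B
    set B : Finset (List A) := (pairFS A).biUnion (fun x => infixFS (S^[j*k] x)) with hB
    have hsubset : {w ∈ substLang θ | w.length ≤ n} ⊆ ↑B := by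
      rintro w ⟨⟨hwne, m, hm1, a, hwa⟩, hwlen⟩
      obtain ⟨m', hm', c, hwc⟩ := pump w m a hwa (j*k)
      have heq : S^[m'] [c] = substWord σj (S^[m'-j*k] [c]) := by
        rw [hσj]
        rw [← iter_eq_substWord θ (j*k), ← Function.iterate_add_apply]
        congr 1
        omega
      rw [heq] at hwc
      obtain ⟨x, _, hx2, hx3⟩ := cover σj hwne hwlen hmin _ hwc
      refine Finset.mem_coe.mpr (Finset.mem_biUnion.mpr ⟨x, mem_pairFS hx2, ?_⟩)
      rw [← iter_eq_substWord] at hx3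
      exact mem_infixFS hx3
    have hcard : ({w ∈ substLang θ | w.length ≤ n}).ncard ≤ B.card := by
      calc _ ≤ (↑B : Set (List A)).ncard := Set.ncard_le_ncard hsubset B.finite_toSet
        _ = B.card := Set.ncard_coe_finset B
    -- bound B.card
    have hKn : K ^ j ≤ K * n ^ K := by
      have h1 : K ^ Nat.log 2 n ≤ n ^ K := by
        calc K ^ Nat.log 2 n ≤ (2^K) ^ Nat.log 2 n :=
              Nat.pow_le_pow_left (Nat.le_of_lt (Nat.lt_two_pow_self (n := K))) _
          _ = (2 ^ Nat.log 2 n) ^ K := by rw [← Nat.pow_mul, ← Nat.pow_mul, Nat.mul_comm]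
          _ ≤ n ^ K := Nat.pow_le_pow_left (Nat.pow_log_le_self 2 (by omega)) _
      calc K ^ j = K ^ Nat.log 2 n * K := by rw [hjdef, pow_succ]
        _ ≤ n ^ K * K := Nat.mul_le_mul_right _ h1
        _ = K * n ^ K := Nat.mul_comm _ _
    have hlenx : ∀ x ∈ pairFS A, (S^[j*k] x).length + 1 ≤ (2*K+1) * n^K := by
      intro x hx
      have h1 : (S^[j*k] x).length ≤ K^j * 2 := by
        have h2 := iterlen (j*k) x
        have h3 := length_le_of_mem_pairFS hx
        have hMK : M ^ (j*k) = K ^ j := by rw [hKdef, ← pow_mul, Nat.mul_comm]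
        calc (S^[j*k] x).length ≤ M^(j*k) * x.length := h2
          _ ≤ M^(j*k) * 2 := Nat.mul_le_mul_left _ h3
          _ = K^j * 2 := by rw [hMK]
      have hn1 : 1 ≤ n ^ K := Nat.one_le_pow _ _ (by omega)
      nlinarith [h1, hKn, hn1]
    calc ({w ∈ substLang θ | w.length ≤ n}).ncard ≤ B.card := hcard
      _ ≤ ∑ x ∈ pairFS A, (infixFS (S^[j*k] x)).card := Finset.card_biUnion_le
      _ ≤ ∑ _x ∈ pairFS A, ((2*K+1) * n^K)^2 := Finset.sum_le_sum (fun x hx =>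
            le_trans (card_infixFS _) (Nat.pow_le_pow_left (hlenx x hx) 2))
      _ = (pairFS A).card * ((2*K+1) * n^K)^2 := by rw [Finset.sum_const, smul_eq_mul]
      _ = ((pairFS A).card * (2*K+1)^2) * n ^ (2*K) := by
            rw [mul_pow, ← pow_mul, Nat.mul_comm K 2]; ring
  -- analytic conclusion
  intro b hb
  have hb0 : (0:ℝ) < b := lt_trans one_pos hb
  have h1 : Tendsto (fun n : ℕ => (((pairFS A).card * (2*K+1)^2 : ℕ):ℝ) *
      ((n:ℝ)^(2*K) / b^n)) atTop (nhds 0) := by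
    have h2 := (tendsto_pow_const_div_const_pow_of_one_lt (2*K) hb).const_mul
      ((((pairFS A).card * (2*K+1)^2 : ℕ)):ℝ)
    rw [mul_zero] at h2
    exact h2
  refine squeeze_zero' (Eventually.of_forall fun n =>
    div_nonneg (Nat.cast_nonneg _) (le_of_lt (pow_pos hb0 n))) ?_ h1
  filter_upwards [eventually_ge_atTop 1] with n hn
  have hle : (({w ∈ substLang θ | w.length ≤ n}).ncard : ℝ) ≤
      (((pairFS A).card * (2*K+1)^2 : ℕ):ℝ) * (n:ℝ)^(2*K) := by
    exact_mod_cast key n hn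
  calc (({w ∈ substLang θ | w.length ≤ n}).ncard : ℝ) / b^n
      ≤ ((((pairFS A).card * (2*K+1)^2 : ℕ):ℝ) * (n:ℝ)^(2*K)) / b^n := by gcongr
    _ = (((pairFS A).card * (2*K+1)^2 : ℕ):ℝ) * ((n:ℝ)^(2*K) / b^n) := by ring
end
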